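/- arXiv:2511.02441 — 3 statements merged into one kernel-verified Lean document; each statement's English description precedes it below -/
import Mathlib

section
/- Let N, K be positive integers, let τ_h, τ_v > 0, and for each μ = 1,…,K let J^μ be a symmetric real N×N matrix. Let σ(x) = 1/(1+e^{-x}) be the logistic function. Suppose u : ℝ → ℝ^N and z : ℝ → ℝ^K are differentiable and satisfy, for all t, the deterministic dynamics τ_h·(du_i/dt) = −u_i + Σ_{j=1}^N Σ_{μ=1}^K J^μ_{ij} z_μ(t) σ(u_j(t)) and τ_v·(dz_μ/dt) = −z_μ + (1/2) Σ_{i,j=1}^N J^μ_{ij} σ(u_i(t)) σ(u_j(t)). Set s_i(t) = σ(u_i(t)) and define the Lyapunov function H(t) = −(1/2) Σ_{μ=1}^K Σ_{i,j=1}^N J^μ_{ij} s_i(t) s_j(t) z_μ(t) + (1/2) Σ_{μ=1}^K z_μ(t)^2 + Σ_{i=1}^N ∫_{1/2}^{s_i(t)} σ^{-1}(y) dy, where σ^{-1}(y) = log(y/(1−y)). Then for all t, dH/dt = −τ_v Σ_{μ=1}^K (dz_μ/dt)^2 − τ_h Σ_{i=1}^N σ'(u_i(t)) (du_i/dt)^2,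 and in particular dH/dt ≤ 0. -/
open MeasureTheory

lemma logistic_hasDerivAt (x : ℝ) :
    HasDerivAt (fun y => 1/(1+Real.exp (-y)))
      ((1/(1+Real.exp (-x))) * (1 - 1/(1+Real.exp (-x)))) x := by
  have hpos : (0:ℝ) < 1 + Real.exp (-x) := by positivity
  have h : HasDerivAt (fun y : ℝ => 1 + Real.exp (-y)) (-Real.exp (-x)) x := by
    simpa using ((Real.hasDerivAt_exp (-x)).comp x (hasDerivAt_neg x)).const_add 1
  have h2 : HasDerivAt (fun y : ℝ => (1 + Real.exp (-y))⁻¹) _ x := h.inv hpos.ne'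
  have : (fun y : ℝ => (1 + Real.exp (-y))⁻¹) = fun y => 1/(1+Real.exp (-y)) := by
    funext y; rw [one_div]
  rw [this] at h2
  convert h2 using 1
  field_simp
  ring

lemma logistic_mem (x : ℝ) : 1/(1+Real.exp (-x)) ∈ Set.Ioo (0:ℝ) 1 := by
  have hpos : (0:ℝ) < 1 + Real.exp (-x) := by positivity
  constructor
  · positivity
  · rw [div_lt_one hpos]; linarith [Real.exp_pos (-x)]

lemma logistic_inv (x : ℝ) :
    Real.log ((1/(1+Real.exp (-x))) / (1 - 1/(1+Real.exp (-x)))) = x := by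
  have hpos : (0:ℝ) < 1 + Real.exp (-x) := by positivity
  have h1 : (1:ℝ) - 1/(1+Real.exp (-x)) = Real.exp (-x) / (1+Real.exp (-x)) := by
    field_simp
    ring
  rw [h1]
  have : (1/(1+Real.exp (-x))) / (Real.exp (-x) / (1+Real.exp (-x))) = Real.exp x := by
    rw [div_div_div_eq, one_mul]
    rw [eq_comm, eq_div_iff (by positivity)]
    have : Real.exp x * Real.exp (-x) = 1 := by rw [← Real.exp_add]; simp
    nlinarith [this]

  rw [this, Real.log_exp]

lemma ftc_log (x₀ : ℝ) (hx : x₀ ∈ Set.Ioo (0:ℝ) 1) :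
    HasDerivAt (fun x => ∫ y in (1/2:ℝ)..x, Real.log (y/(1-y)))
      (Real.log (x₀/(1-x₀))) x₀ := by
  have hcont : ∀ y ∈ Set.Ioo (0:ℝ) 1, ContinuousAt (fun y => Real.log (y/(1-y))) y := by
    intro y hy
    have h1 : (1:ℝ) - y ≠ 0 := by linarith [hy.2]
    have h2 : y / (1-y) ≠ 0 := by
      apply div_ne_zero (ne_of_gt hy.1) h1
    have : ContinuousAt (fun y : ℝ => y / (1 - y)) y :=
      continuousAt_id.div (continuousAt_const.sub continuousAt_id) h1
    exact this.log h2
  have hopen : IsOpen (Set.Ioo (0:ℝ) 1) := isOpen_Ioo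
  have hco : ContinuousOn (fun y => Real.log (y/(1-y))) (Set.Ioo (0:ℝ) 1) :=
    fun y hy => (hcont y hy).continuousWithinAt
  have hsub : Set.uIcc (1/2 : ℝ) x₀ ⊆ Set.Ioo (0:ℝ) 1 := by
    apply Set.OrdConnected.uIcc_subset (Set.ordConnected_Ioo)
    · constructor <;> norm_num
    · exact hx
  have hint : IntervalIntegrable (fun y => Real.log (y/(1-y))) volume (1/2) x₀ :=
    (hco.mono hsub).intervalIntegrable
  have hmeas : StronglyMeasurableAtFilter (fun y => Real.log (y/(1-y))) (nhds x₀) volume :=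
    hco.stronglyMeasurableAtFilter hopen x₀ hx
  exact intervalIntegral.integral_hasDerivAt_right hint hmeas (hcont x₀ hx)

lemma key_alg {N K : ℕ} {τh τv : ℝ}
    {J : Fin K → Matrix (Fin N) (Fin N) ℝ} (hJ : ∀ μ (i j : Fin N), J μ j i = J μ i j)
    {uu a b u' : Fin N → ℝ} {zz z' : Fin K → ℝ}
    (hdz : ∀ μ, τv * z' μ = -(zz μ) + (1/2) * ∑ i, ∑ j, J μ i j * a i * a j)
    (hdu : ∀ i, τh * u' i = -(uu i) + ∑ j, ∑ μ, J μ i j * zz μ * a j) :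
    -(1/2) * (∑ μ, ∑ i, ∑ j, (J μ i j * (b i * u' i) * a j * zz μ
        + J μ i j * a i * (b j * u' j) * zz μ + J μ i j * a i * a j * z' μ))
      + ∑ μ, zz μ * z' μ + ∑ i, uu i * (b i * u' i)
    = -τv * ∑ μ, (z' μ)^2 - τh * ∑ i, b i * (u' i)^2 := by
  have h1 : -τv * ∑ μ, (z' μ)^2
      = (∑ μ, zz μ * z' μ) - (1/2) * ∑ μ, ∑ i, ∑ j, J μ i j * a i * a j * z' μ := by
    rw [Finset.mul_sum, Finset.mul_sum, ← Finset.sum_sub_distrib]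
    refine Finset.sum_congr rfl fun μ _ => ?_
    have e : ∑ i, ∑ j, J μ i j * a i * a j * z' μ
        = (∑ i, ∑ j, J μ i j * a i * a j) * z' μ := by
      rw [Finset.sum_mul]
      exact Finset.sum_congr rfl fun i _ => (Finset.sum_mul _ _ _).symm
    rw [e]
    linear_combination (-(z' μ)) * hdz μ
  have h2 : -τh * ∑ i, b i * (u' i)^2
      = (∑ i, uu i * (b i * u' i))
        - ∑ i, ∑ j, ∑ μ, J μ i j * zz μ * a j * (b i * u' i) := by
    rw [Finset.mul_sum, ← Finset.sum_sub_distrib]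
    refine Finset.sum_congr rfl fun i _ => ?_
    have e : ∑ j, ∑ μ, J μ i j * zz μ * a j * (b i * u' i)
        = (∑ j, ∑ μ, J μ i j * zz μ * a j) * (b i * u' i) := by
      rw [Finset.sum_mul]
      exact Finset.sum_congr rfl fun j _ => (Finset.sum_mul _ _ _).symm
    rw [e]
    linear_combination (-(b i * u' i)) * hdu i
  have h3 : (∑ i, ∑ j, ∑ μ, J μ i j * zz μ * a j * (b i * u' i))
      = ∑ μ, ∑ i, ∑ j, J μ i j * (b i * u' i) * a j * zz μ := by
    refine Eq.trans (Finset.sum_congr rfl fun i _ => Finset.sum_comm) ?_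
    rw [Finset.sum_comm]
    exact Finset.sum_congr rfl fun μ _ => Finset.sum_congr rfl fun i _ =>
      Finset.sum_congr rfl fun j _ => by ring
  have h4 : (∑ μ, ∑ i, ∑ j, J μ i j * a i * (b j * u' j) * zz μ)
      = ∑ μ, ∑ i, ∑ j, J μ i j * (b i * u' i) * a j * zz μ := by
    refine Finset.sum_congr rfl fun μ _ => ?_
    rw [Finset.sum_comm]
    refine Finset.sum_congr rfl fun i _ => Finset.sum_congr rfl fun j _ => ?_
    rw [hJ μ i j]; ring
  have hsplit : (∑ μ, ∑ i, ∑ j, (J μ i j * (b i * u' i) * a j * zz μ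
        + J μ i j * a i * (b j * u' j) * zz μ + J μ i j * a i * a j * z' μ))
      = (∑ μ, ∑ i, ∑ j, J μ i j * (b i * u' i) * a j * zz μ)
        + (∑ μ, ∑ i, ∑ j, J μ i j * a i * (b j * u' j) * zz μ)
        + (∑ μ, ∑ i, ∑ j, J μ i j * a i * a j * z' μ) := by
    simp [Finset.sum_add_distrib]
  rw [hsplit]
  linear_combination (-1) * h1 - h2 + h3 - (1/2) * h4

/-- The function `H` is a Lyapunov function for the deterministic
two-layer (grid-cell / place-cell) dynamics: its time derivative equals
`-τ_v Σ_μ (dz_μ/dt)² - τ_h Σ_i σ'(u_i) (du_i/dt)²`, and in particular is nonpositive. -/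
theorem stmt0
    (N K : ℕ) (hN : 0 < N) (hK : 0 < K)
    (τh τv : ℝ) (hτh : 0 < τh) (hτv : 0 < τv)
    (J : Fin K → Matrix (Fin N) (Fin N) ℝ)
    (hJsymm : ∀ μ, (J μ).IsSymm)
    (σ : ℝ → ℝ) (hσ : ∀ x, σ x = 1 / (1 + Real.exp (-x)))
    (u : ℝ → Fin N → ℝ) (z : ℝ → Fin K → ℝ)
    (hu : ∀ i, Differentiable ℝ (fun t => u t i))
    (hz : ∀ μ, Differentiable ℝ (fun t => z t μ))
    (hdynu : ∀ t i, τh * deriv (fun t' => u t' i) t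
      = -(u t i) + ∑ j, ∑ μ, J μ i j * z t μ * σ (u t j))
    (hdynz : ∀ t μ, τv * deriv (fun t' => z t' μ) t
      = -(z t μ) + (1/2) * ∑ i, ∑ j, J μ i j * σ (u t i) * σ (u t j))
    (s : ℝ → Fin N → ℝ) (hs : ∀ t i, s t i = σ (u t i))
    (H : ℝ → ℝ)
    (hH : ∀ t, H t
      = -(1/2) * ∑ μ, ∑ i, ∑ j, J μ i j * s t i * s t j * z t μ
        + (1/2) * ∑ μ, (z t μ)^2
        + ∑ i, ∫ y in (1/2 : ℝ)..(s t i), Real.log (y / (1 - y))) :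
    ∀ t, (deriv H t
        = -τv * ∑ μ, (deriv (fun t' => z t' μ) t)^2
          - τh * ∑ i, deriv σ (u t i) * (deriv (fun t' => u t' i) t)^2)
      ∧ deriv H t ≤ 0 := by
  have hσe : σ = fun x => 1/(1+Real.exp (-x)) := funext hσ
  subst hσe
  have hse : s = fun t i => 1/(1+Real.exp (-(u t i))) := funext fun t => funext fun i => hs t i
  subst hse
  have hHe : H = fun t => -(1/2) * ∑ μ, ∑ i, ∑ j,
        J μ i j * (1/(1+Real.exp (-(u t i)))) * (1/(1+Real.exp (-(u t j)))) * z t μ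
      + (1/2) * ∑ μ, (z t μ)^2
      + ∑ i, ∫ y in (1/2 : ℝ)..(1/(1+Real.exp (-(u t i)))), Real.log (y / (1 - y)) :=
    funext hH
  subst hHe
  intro t
  -- basic derivative facts
  have hud : ∀ i, HasDerivAt (fun t' => u t' i) (deriv (fun t' => u t' i) t) t :=
    fun i => ((hu i) t).hasDerivAt
  have hzd : ∀ μ, HasDerivAt (fun t' => z t' μ) (deriv (fun t' => z t' μ) t) t :=
    fun μ => ((hz μ) t).hasDerivAt
  have hS : ∀ i, HasDerivAt (fun t' => 1/(1+Real.exp (-(u t' i))))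
      ((1/(1+Real.exp (-(u t i)))) * (1 - 1/(1+Real.exp (-(u t i))))
        * deriv (fun t' => u t' i) t) t := by
    intro i
    have := (logistic_hasDerivAt (u t i)).comp t (hud i)
    exact this
  have hC : ∀ i, HasDerivAt
      (fun t' => ∫ y in (1/2:ℝ)..(1/(1+Real.exp (-(u t' i)))), Real.log (y/(1-y)))
      (u t i * ((1/(1+Real.exp (-(u t i)))) * (1 - 1/(1+Real.exp (-(u t i))))
        * deriv (fun t' => u t' i) t)) t := by
    intro i
    have h := (ftc_log _ (logistic_mem (u t i))).comp t (hS i)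
    rw [logistic_inv] at h
    exact h
  -- derivative of H
  have hD : HasDerivAt (fun t => -(1/2) * ∑ μ, ∑ i, ∑ j,
        J μ i j * (1/(1+Real.exp (-(u t i)))) * (1/(1+Real.exp (-(u t j)))) * z t μ
      + (1/2) * ∑ μ, (z t μ)^2
      + ∑ i, ∫ y in (1/2 : ℝ)..(1/(1+Real.exp (-(u t i)))), Real.log (y / (1 - y)))
      (-(1/2) * (∑ μ, ∑ i, ∑ j,
        ((J μ i j * ((1/(1+Real.exp (-(u t i)))) * (1 - 1/(1+Real.exp (-(u t i))))
            * deriv (fun t' => u t' i) t) * (1/(1+Real.exp (-(u t j))))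
          + J μ i j * (1/(1+Real.exp (-(u t i)))) * ((1/(1+Real.exp (-(u t j))))
            * (1 - 1/(1+Real.exp (-(u t j)))) * deriv (fun t' => u t' j) t)) * z t μ
          + J μ i j * (1/(1+Real.exp (-(u t i)))) * (1/(1+Real.exp (-(u t j))))
            * deriv (fun t' => z t' μ) t))
      + (1/2) * (∑ μ, (2:ℕ) * z t μ ^ 1 * deriv (fun t' => z t' μ) t)
      + ∑ i, u t i * ((1/(1+Real.exp (-(u t i)))) * (1 - 1/(1+Real.exp (-(u t i))))
          * deriv (fun t' => u t' i) t)) t := by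
    refine HasDerivAt.add (HasDerivAt.add ?_ ?_) (HasDerivAt.fun_sum fun i _ => hC i)
    · refine HasDerivAt.const_mul _ (HasDerivAt.fun_sum fun μ _ => HasDerivAt.fun_sum fun i _ =>
        HasDerivAt.fun_sum fun j _ => ?_)
      exact (((hS i).const_mul (J μ i j)).mul (hS j)).mul (hzd μ)
    · exact HasDerivAt.const_mul _ (HasDerivAt.fun_sum fun μ _ => (hzd μ).fun_pow 2)
  have hderσ : ∀ x, deriv (fun y => 1/(1+Real.exp (-y))) x
      = (1/(1+Real.exp (-x))) * (1 - 1/(1+Real.exp (-x))) :=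
    fun x => (logistic_hasDerivAt x).deriv
  have hJ' : ∀ μ (i j : Fin N), J μ j i = J μ i j := fun μ i j => (hJsymm μ).apply i j
  have halg := key_alg (τh := τh) (τv := τv) (J := J)
    (uu := u t) (a := fun i => 1/(1+Real.exp (-(u t i))))
    (b := fun i => (1/(1+Real.exp (-(u t i)))) * (1 - 1/(1+Real.exp (-(u t i)))))
    (u' := fun i => deriv (fun t' => u t' i) t)
    (zz := z t) (z' := fun μ => deriv (fun t' => z t' μ) t)
    hJ' (fun μ => hdynz t μ) (fun i => hdynu t i)
  beta_reduce at halg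
  have heq : deriv (fun t => -(1/2) * ∑ μ, ∑ i, ∑ j,
        J μ i j * (1/(1+Real.exp (-(u t i)))) * (1/(1+Real.exp (-(u t j)))) * z t μ
      + (1/2) * ∑ μ, (z t μ)^2
      + ∑ i, ∫ y in (1/2 : ℝ)..(1/(1+Real.exp (-(u t i)))), Real.log (y / (1 - y))) t
      = -τv * ∑ μ, (deriv (fun t' => z t' μ) t)^2
        - τh * ∑ i, deriv (fun x => 1/(1+Real.exp (-x))) (u t i)
            * (deriv (fun t' => u t' i) t)^2 := by
    rw [hD.deriv]
    simp only [hderσ]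
    rw [← halg]
    congr 1
    · congr 1
      · congr 1
        refine Finset.sum_congr rfl fun μ _ => Finset.sum_congr rfl fun i _ =>
          Finset.sum_congr rfl fun j _ => by ring
      · rw [Finset.mul_sum]
        refine Finset.sum_congr rfl fun μ _ => by push_cast; ring
  refine ⟨heq, ?_⟩
  rw [heq]
  have h2 : (0:ℝ) ≤ ∑ μ, (deriv (fun t' => z t' μ) t)^2 :=
    Finset.sum_nonneg fun μ _ => sq_nonneg _
  have h3 : (0:ℝ) ≤ ∑ i, deriv (fun x => 1/(1+Real.exp (-x))) (u t i)
      * (deriv (fun t' => u t' i) t)^2 := by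
    refine Finset.sum_nonneg fun i _ => mul_nonneg ?_ (sq_nonneg _)
    rw [hderσ]
    have hm := logistic_mem (u t i)
    have := hm.1; have := hm.2
    nlinarith
  nlinarith
end

section
/- Let β > 0, let N, K, d be positive integers, and let η^μ_i ∈ ℝ^d for i = 1,…,N and μ = 1,…,K. Then Σ_{s ∈ {0,1}^N} ∫_{ℝ^K} [∏_{μ=1}^K √(β/(2π)) e^{−β z_μ^2/2}] · exp( β √(2/N^3) Σ_{μ=1}^K ( Σ_{i,j=1}^N ⟨η^μ_i, η^μ_j⟩ s_i s_j ) z_μ ) dz = Σ_{s ∈ {0,1}^N} exp( (β/N^3) Σ_{μ=1}^K Σ_{i_1,i_2,i_3,i_4=1}^N ⟨η^μ_{i_1}, η^μ_{i_2}⟩ ⟨η^μ_{i_3}, η^μ_{i_4}⟩ s_{i_1} s_{i_2} s_{i_3} s_{i_4} ). In other words, integrating out the Gaussian place-cell variables z from the bipartite place-cell/grid-cell partition function yields exactly the partition function of a dense four-body (p = 4) Battaglia–Treves network on the grid-cell variables alone. -/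
open MeasureTheory

lemma gauss_lin (b c : ℝ) (hb : 0 < b) :
    ∫ x : ℝ, Real.exp (-b * x ^ 2 + c * x)
      = Real.sqrt (Real.pi / b) * Real.exp (c ^ 2 / (4 * b)) := by
  have h := integral_add_right_eq_self (μ := (volume : Measure ℝ))
      (fun x => Real.exp (-b * x ^ 2 + c * x)) (c / (2 * b))
  have heq : ∀ x : ℝ, Real.exp (-b * (x + c / (2 * b)) ^ 2 + c * (x + c / (2 * b)))
      = Real.exp (-b * x ^ 2) * Real.exp (c ^ 2 / (4 * b)) := by
    intro x
    rw [← Real.exp_add]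
    congr 1
    field_simp
    ring
  simp only [heq] at h
  rw [← h, integral_mul_const, integral_gaussian]

lemma gauss_norm (β c : ℝ) (hβ : 0 < β) :
    ∫ x : ℝ, (Real.sqrt (β / (2 * Real.pi)) * Real.exp (-β * x ^ 2 / 2)) * Real.exp (c * x)
      = Real.exp (c ^ 2 / (2 * β)) := by
  have h1 : ∀ x : ℝ, (Real.sqrt (β / (2 * Real.pi)) * Real.exp (-β * x ^ 2 / 2)) * Real.exp (c * x)
      = Real.sqrt (β / (2 * Real.pi)) * Real.exp (-(β / 2) * x ^ 2 + c * x) := by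
    intro x
    rw [mul_assoc, ← Real.exp_add]
    ring_nf
  simp only [h1]
  rw [integral_const_mul, gauss_lin _ _ (by positivity), ← mul_assoc,
    ← Real.sqrt_mul (by positivity)]
  have hπ := Real.pi_pos
  have : β / (2 * Real.pi) * (Real.pi / (β / 2)) = 1 := by field_simp
  rw [this, Real.sqrt_one, one_mul]
  congr 1
  field_simp
  ring

/-- Integrating out the Gaussian place-cell variables `z` from the
bipartite place-cell/grid-cell partition function (at inhibition strength λ = 1) yields
exactly the partition function of a dense four-body (p = 4) Battaglia–Treves network
on the Boolean grid-cell variables alone. -/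
theorem stmt1 (β : ℝ) (hβ : 0 < β) (N K d : ℕ) (hN : 0 < N) (hK : 0 < K) (hd : 0 < d)
    (η : Fin K → Fin N → Fin d → ℝ) :
    ∑ s : Fin N → Bool,
      ∫ z : Fin K → ℝ,
        (∏ μ, Real.sqrt (β / (2 * Real.pi)) * Real.exp (-β * (z μ)^2 / 2)) *
          Real.exp (β * Real.sqrt (2 / (N : ℝ)^3) *
            ∑ μ, (∑ i, ∑ j, (∑ t, η μ i t * η μ j t) *
              (if s i then (1:ℝ) else 0) * (if s j then (1:ℝ) else 0)) * z μ)
    = ∑ s : Fin N → Bool,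
        Real.exp ((β / (N : ℝ)^3) *
          ∑ μ, ∑ i₁, ∑ i₂, ∑ i₃, ∑ i₄,
            (∑ t, η μ i₁ t * η μ i₂ t) * (∑ t, η μ i₃ t * η μ i₄ t) *
              (if s i₁ then (1:ℝ) else 0) * (if s i₂ then (1:ℝ) else 0) *
              (if s i₃ then (1:ℝ) else 0) * (if s i₄ then (1:ℝ) else 0)) := by
  have hN3 : (0:ℝ) < (N : ℝ) ^ 3 := by positivity
  refine Finset.sum_congr rfl fun s _ => ?_
  set A : Fin K → ℝ := fun μ => ∑ i, ∑ j, (∑ t, η μ i t * η μ j t) *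
      (if s i then (1:ℝ) else 0) * (if s j then (1:ℝ) else 0) with hA
  set c : Fin K → ℝ := fun μ => β * Real.sqrt (2 / (N : ℝ)^3) * A μ with hc
  have hintegrand : ∀ z : Fin K → ℝ,
      (∏ μ, Real.sqrt (β / (2 * Real.pi)) * Real.exp (-β * (z μ)^2 / 2)) *
          Real.exp (β * Real.sqrt (2 / (N : ℝ)^3) * ∑ μ, A μ * z μ)
      = ∏ μ, (Real.sqrt (β / (2 * Real.pi)) * Real.exp (-β * (z μ)^2 / 2))
          * Real.exp (c μ * z μ) := by
    intro z
    rw [Finset.mul_sum, Real.exp_sum, ← Finset.prod_mul_distrib]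
    refine Finset.prod_congr rfl fun μ _ => ?_
    congr 2
    simp only [hc]
    ring
  simp only [hA] at hintegrand
  simp only [hintegrand]
  rw [integral_fintype_prod_volume_eq_prod
    (fun μ x => (Real.sqrt (β / (2 * Real.pi)) * Real.exp (-β * x ^ 2 / 2)) * Real.exp (c μ * x))]
  have h1 : ∀ μ : Fin K,
      (∫ x : ℝ, (Real.sqrt (β / (2 * Real.pi)) * Real.exp (-β * x ^ 2 / 2)) * Real.exp (c μ * x))
      = Real.exp ((β / (N : ℝ)^3) * (A μ * A μ)) := by
    intro μ
    rw [gauss_norm β (c μ) hβ]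
    congr 1
    simp only [hc]
    rw [mul_pow, mul_pow, Real.sq_sqrt (by positivity)]
    field_simp
  simp only [h1]
  rw [← Real.exp_sum]
  congr 1
  rw [Finset.mul_sum]
  refine Finset.sum_congr rfl fun μ _ => ?_
  congr 1
  have expand : ∀ (f : Fin N → Fin N → ℝ),
      (∑ i, ∑ j, f i j) * (∑ i, ∑ j, f i j)
        = ∑ i₁, ∑ i₂, ∑ i₃, ∑ i₄, f i₁ i₂ * f i₃ i₄ := by
    intro f
    simp_rw [Finset.sum_mul, Finset.mul_sum]
  rw [hA, expand]
  refine Finset.sum_congr rfl fun i₁ _ => Finset.sum_congr rfl fun i₂ _ => ?_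
  refine Finset.sum_congr rfl fun i₃ _ => Finset.sum_congr rfl fun i₄ _ => ?_
  ring
end

section
/- Let p ≥ 4 be an even integer, let α, β > 0, λ ∈ ℝ, and let x̄, m̄ ∈ ℝ, q̄_1 > 0, q̄_2 > 0, p̄_1 ∈ ℝ, p̄_2 > 0. Define f(θ, z) = β p x̄^{p−1} cos θ − β p (λ−1) m̄^{p−1} + (p/2)( p̄_1 q̄_1^{p/2−1} − p̄_2 q̄_2^{p/2−1} ) + √( p p̄_2 q̄_2^{p/2−1} ) z, and define the replica-symmetric free energy A( p̄_2 ) = (1−p) β x̄^p − β(λ−1)(1−p) m̄^p + α β^2 ( q̄_1^p − q̄_2^p ) − (p/2)( p̄_1 q̄_1^{p/2} − p̄_2 q̄_2^{p/2} ) + (1/π) ∫_0^π ∫_ℝ log( 1 + e^{f(θ,z)} ) dγ(z) dθ, viewed as a function of p̄_2 with all other variables fixed. Then A is differentiable in p̄_2 with ∂A/∂p̄_2 = (p/2) q̄_2^{p/2−1} ( q̄_2 − H ), where H = (1/π) ∫_0^π ∫_ℝ σ( f(θ,z) )^2 dγ(z) dθ and σ(x) = 1/(1+e^{-x}). In particular,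 since q̄_2 > 0, the stationarity condition ∂A/∂p̄_2 = 0 holds if and only if q̄_2 = (1/π) ∫_0^π ∫_ℝ σ( f(θ,z) )^2 dγ(z) dθ. -/
open MeasureTheory ProbabilityTheory Filter

noncomputable section Aux16

/-- The logistic sigmoid. -/
def sigm (x : ℝ) : ℝ := 1 / (1 + Real.exp (-x))

lemma one_add_exp_neg_pos (x : ℝ) : 0 < 1 + Real.exp (-x) := by positivity

lemma sigm_pos (x : ℝ) : 0 < sigm x := by unfold sigm; positivity

lemma sigm_le_one (x : ℝ) : sigm x ≤ 1 := by
  rw [sigm, div_le_one (one_add_exp_neg_pos x)]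
  nlinarith [Real.exp_pos (-x)]

lemma abs_sigm_le_one (x : ℝ) : |sigm x| ≤ 1 := by
  rw [abs_of_pos (sigm_pos x)]; exact sigm_le_one x

lemma continuous_sigm : Continuous sigm := by
  apply Continuous.div continuous_const (by continuity)
  intro x; exact (one_add_exp_neg_pos x).ne'

lemma hasDerivAt_sigm (x : ℝ) : HasDerivAt sigm (sigm x - sigm x ^ 2) x := by
  have h1 : HasDerivAt (fun y : ℝ => 1 + Real.exp (-y)) (-Real.exp (-x)) x := by
    have := ((Real.hasDerivAt_exp (-x)).comp x (hasDerivAt_neg x)).const_add 1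
    simpa using this
  have h2 := h1.inv (one_add_exp_neg_pos x).ne'
  have hfun : (fun y : ℝ => 1 + Real.exp (-y))⁻¹ = sigm := by
    funext y; simp [sigm, one_div]
  rw [hfun] at h2
  refine h2.congr_deriv (Eq.symm ?_)
  have h := (one_add_exp_neg_pos x).ne'
  simp only [sigm]
  field_simp
  ring

/-- log(1 + e^x). -/
def gl (x : ℝ) : ℝ := Real.log (1 + Real.exp x)

lemma one_add_exp_pos (x : ℝ) : 0 < 1 + Real.exp x := by positivity

lemma hasDerivAt_gl (x : ℝ) : HasDerivAt gl (sigm x) x := by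
  have h1 : HasDerivAt (fun y : ℝ => 1 + Real.exp y) (Real.exp x) x :=
    (Real.hasDerivAt_exp x).const_add 1
  have h2 := h1.log (one_add_exp_pos x).ne'
  refine h2.congr_deriv (Eq.symm ?_)
  rw [sigm, Real.exp_neg]
  have h := (Real.exp_pos x).ne'
  have h' := (one_add_exp_pos x).ne'
  field_simp
  ring

lemma continuous_gl : Continuous gl := by
  show Continuous fun x => Real.log (1 + Real.exp x)
  exact Continuous.log (by continuity) fun x => (one_add_exp_pos x).ne'

lemma gl_nonneg (x : ℝ) : 0 ≤ gl x := by
  unfold gl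
  apply Real.log_nonneg
  nlinarith [Real.exp_pos x]

lemma gl_le (x : ℝ) : gl x ≤ Real.log 2 + |x| := by
  unfold gl
  have h1 : 1 + Real.exp x ≤ 2 * Real.exp |x| := by
    have h2 : Real.exp x ≤ Real.exp |x| := Real.exp_le_exp.2 (le_abs_self x)
    have h3 : (1:ℝ) ≤ Real.exp |x| := Real.one_le_exp (abs_nonneg x)
    nlinarith
  calc Real.log (1 + Real.exp x) ≤ Real.log (2 * Real.exp |x|) :=
        Real.log_le_log (one_add_exp_pos x) h1
    _ = Real.log 2 + |x| := by rw [Real.log_mul (by norm_num) (Real.exp_pos _).ne', Real.log_exp]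

lemma abs_gl_le (x : ℝ) : |gl x| ≤ Real.log 2 + |x| := by
  rw [abs_of_nonneg (gl_nonneg x)]; exact gl_le x

/-- Standard Gaussian density. -/
def gpdf (z : ℝ) : ℝ := gaussianPDFReal 0 1 z

lemma gpdf_eq (z : ℝ) : gpdf z = (Real.sqrt (2 * Real.pi))⁻¹ * Real.exp (-z ^ 2 / 2) := by
  simp [gpdf, gaussianPDFReal]

lemma gpdf_nonneg (z : ℝ) : 0 ≤ gpdf z := gaussianPDFReal_nonneg 0 1 z

lemma continuous_gpdf : Continuous gpdf := by
  have : gpdf = fun z => (Real.sqrt (2 * Real.pi))⁻¹ * Real.exp (-z ^ 2 / 2) :=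
    funext gpdf_eq
  rw [this]; continuity

lemma hasDerivAt_gpdf (z : ℝ) : HasDerivAt gpdf (-z * gpdf z) z := by
  have h0 : HasDerivAt (fun z : ℝ => -z ^ 2 / 2) (-z) z := by
    refine (((hasDerivAt_pow 2 z).neg).div_const 2).congr_deriv (Eq.symm ?_)
    ring
  have h1 := (h0.exp).const_mul (Real.sqrt (2 * Real.pi))⁻¹
  have hfun : (fun y : ℝ => (Real.sqrt (2 * Real.pi))⁻¹ * Real.exp (-y ^ 2 / 2)) = gpdf :=
    (funext gpdf_eq).symm
  rw [hfun] at h1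
  refine h1.congr_deriv (Eq.symm ?_)
  rw [gpdf_eq]; ring

lemma tendsto_gpdf_atTop : Tendsto gpdf atTop (nhds 0) := by
  have hsq : Tendsto (fun z : ℝ => z ^ 2) atTop atTop := tendsto_pow_atTop two_ne_zero
  have h1 : Tendsto (fun z : ℝ => -z ^ 2 / 2) atTop atBot := by
    simp only [neg_div]
    exact tendsto_neg_atTop_atBot.comp (hsq.atTop_div_const two_pos)
  have h2 := Real.tendsto_exp_atBot.comp h1
  have h3 := h2.const_mul (Real.sqrt (2 * Real.pi))⁻¹
  rw [mul_zero] at h3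
  refine h3.congr fun z => ?_
  rw [gpdf_eq]; rfl

lemma tendsto_gpdf_atBot : Tendsto gpdf atBot (nhds 0) := by
  have hsq : Tendsto (fun z : ℝ => z ^ 2) atBot atTop := by
    have := (tendsto_pow_atTop (two_ne_zero)).comp tendsto_neg_atBot_atTop (α := ℝ)
    refine this.congr fun z => ?_
    simp [neg_pow]
  have h1 : Tendsto (fun z : ℝ => -z ^ 2 / 2) atBot atBot := by
    simp only [neg_div]
    exact tendsto_neg_atTop_atBot.comp (hsq.atTop_div_const two_pos)
  have h2 := Real.tendsto_exp_atBot.comp h1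
  have h3 := h2.const_mul (Real.sqrt (2 * Real.pi))⁻¹
  rw [mul_zero] at h3
  refine h3.congr fun z => ?_
  rw [gpdf_eq]; rfl

lemma integrable_gpdf : Integrable gpdf := integrable_gaussianPDFReal 0 1

lemma integrable_abs_mul_gpdf : Integrable (fun z => |z| * gpdf z) := by
  have h := ((integrable_mul_exp_neg_mul_sq (by norm_num : (0:ℝ) < 1/2)).abs).const_mul
    (Real.sqrt (2 * Real.pi))⁻¹
  refine h.congr (Eventually.of_forall fun z => ?_)
  show (Real.sqrt (2 * Real.pi))⁻¹ * |z * Real.exp (-(1/2) * z ^ 2)| = |z| * gpdf z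
  rw [gpdf_eq, abs_mul, abs_of_pos (Real.exp_pos _),
    show -(1/2 : ℝ) * z ^ 2 = -z ^ 2 / 2 by ring]
  ring

/-- Integrability of `gpdf * f` for continuous `f` with linear growth. -/
lemma integrable_gpdf_mul (f : ℝ → ℝ) (hf : Continuous f) (a b : ℝ)
    (hb : ∀ z, |f z| ≤ a + b * |z|) : Integrable (fun z => gpdf z * f z) := by
  have hmeas : AEStronglyMeasurable (fun z => gpdf z * f z) volume :=
    (continuous_gpdf.mul hf).aestronglyMeasurable
  refine Integrable.mono' ((integrable_gpdf.const_mul |a|).add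
    (integrable_abs_mul_gpdf.const_mul |b|)) hmeas (Eventually.of_forall fun z => ?_)
  have h1 : ‖gpdf z * f z‖ = gpdf z * |f z| := by
    rw [norm_mul, Real.norm_eq_abs, Real.norm_eq_abs, abs_of_nonneg (gpdf_nonneg z)]
  rw [h1]
  have h2 : |f z| ≤ |a| + |b| * |z| := by
    refine (hb z).trans ?_
    have := le_abs_self a
    have hb2 : b * |z| ≤ |b| * |z| := by
      apply mul_le_mul_of_nonneg_right (le_abs_self b) (abs_nonneg z)
    linarith
  have := mul_le_mul_of_nonneg_left h2 (gpdf_nonneg z)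
  calc gpdf z * |f z| ≤ gpdf z * (|a| + |b| * |z|) := this
    _ = |a| * gpdf z + |b| * (|z| * gpdf z) := by ring

lemma gaussian_eq_withDensity :
    gaussianReal 0 1
      = volume.withDensity fun z => ((gaussianPDFReal 0 1 z).toNNReal : ENNReal) := by
  rw [gaussianReal_of_var_ne_zero 0 one_ne_zero]; rfl

lemma integral_gauss_eq (f : ℝ → ℝ) :
    ∫ z, f z ∂(gaussianReal 0 1) = ∫ z, gpdf z * f z := by
  rw [gaussian_eq_withDensity,
    integral_withDensity_eq_integral_smul
      ((measurable_gaussianPDFReal 0 1).real_toNNReal) f]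
  congr 1; funext z
  simp [gpdf, NNReal.smul_def, Real.coe_toNNReal _ (gaussianPDFReal_nonneg 0 1 z)]

lemma integrable_gauss_of_bound (f : ℝ → ℝ) (hf : Continuous f) (a b : ℝ)
    (hb : ∀ z, |f z| ≤ a + b * |z|) : Integrable f (gaussianReal 0 1) := by
  rw [gaussian_eq_withDensity, integrable_withDensity_iff
    ((measurable_gaussianPDFReal 0 1).real_toNNReal.coe_nnreal_ennreal)
    (Eventually.of_forall fun z => ENNReal.coe_lt_top)]
  refine (integrable_gpdf_mul f hf a b hb).congr (Eventually.of_forall fun z => ?_)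
  simp only [ENNReal.coe_toReal, Real.coe_toNNReal _ (gaussianPDFReal_nonneg 0 1 z)]
  show gpdf z * f z = f z * gaussianPDFReal 0 1 z
  rw [gpdf]; ring

lemma integrable_gauss_abs : Integrable (fun z : ℝ => |z|) (gaussianReal 0 1) :=
  integrable_gauss_of_bound _ continuous_abs 0 1 (fun z => by simp)

/-- **Stein's lemma / Gaussian integration by parts** for the sigmoid. -/
lemma stein_sigm (ν c : ℝ) :
    ∫ z, z * sigm (ν + c * z) ∂(gaussianReal 0 1)
      = c * ∫ z, (sigm (ν + c * z) - sigm (ν + c * z) ^ 2) ∂(gaussianReal 0 1) := by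
  rw [integral_gauss_eq, integral_gauss_eq]
  set W : ℝ → ℝ := fun z => gpdf z * sigm (ν + c * z) with hW_def
  set W' : ℝ → ℝ := fun z =>
    -z * gpdf z * sigm (ν + c * z)
      + gpdf z * (c * (sigm (ν + c * z) - sigm (ν + c * z) ^ 2)) with hW'_def
  have hW : ∀ z, HasDerivAt W (W' z) z := by
    intro z
    have hinner : HasDerivAt (fun z : ℝ => ν + c * z) c z := by
      simpa using ((hasDerivAt_id z).const_mul c).const_add ν
    have hs : HasDerivAt (fun z : ℝ => sigm (ν + c * z))
        ((sigm (ν + c * z) - sigm (ν + c * z) ^ 2) * c) z :=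
      (hasDerivAt_sigm (ν + c * z)).comp (h := fun z : ℝ => ν + c * z) z hinner
    have := (hasDerivAt_gpdf z).mul hs
    refine this.congr_deriv (Eq.symm ?_)
    simp only [hW'_def]
    ring
  have hcont : Continuous (fun z : ℝ => sigm (ν + c * z)) :=
    continuous_sigm.comp (by continuity)
  have hint : Integrable W' := by
    have : W' = fun z => gpdf z *
        (-z * sigm (ν + c * z) + c * (sigm (ν + c * z) - sigm (ν + c * z) ^ 2)) := by
      funext z; simp only [hW'_def]; ring
    rw [this]
    apply integrable_gpdf_mul _ (by fun_prop) (2 * |c|) 1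
    intro z
    have h1 := abs_sigm_le_one (ν + c * z)
    have h2 : |sigm (ν + c * z) ^ 2| ≤ 1 := by
      rw [abs_pow]; nlinarith [abs_nonneg (sigm (ν + c * z))]
    have hdiff : |sigm (ν + c * z) - sigm (ν + c * z) ^ 2| ≤ 2 := by
      calc |sigm (ν + c * z) - sigm (ν + c * z) ^ 2|
          ≤ |sigm (ν + c * z)| + |sigm (ν + c * z) ^ 2| := abs_sub _ _
        _ ≤ 2 := by linarith
    have hz : |(-z) * sigm (ν + c * z)| ≤ |z| := by
      rw [abs_mul, abs_neg]
      calc |z| * |sigm (ν + c * z)| ≤ |z| * 1 :=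
            mul_le_mul_of_nonneg_left h1 (abs_nonneg z)
        _ = |z| := mul_one _
    have hc : |c * (sigm (ν + c * z) - sigm (ν + c * z) ^ 2)| ≤ |c| * 2 := by
      rw [abs_mul]
      exact mul_le_mul_of_nonneg_left hdiff (abs_nonneg c)
    calc |(-z * sigm (ν + c * z) + c * (sigm (ν + c * z) - sigm (ν + c * z) ^ 2))|
        ≤ |(-z) * sigm (ν + c * z)| + |c * (sigm (ν + c * z) - sigm (ν + c * z) ^ 2)| :=
          abs_add_le _ _
      _ ≤ |z| + |c| * 2 := add_le_add hz hc
      _ = 2 * |c| + 1 * |z| := by ring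
  have htop : Tendsto W atTop (nhds 0) := by
    refine squeeze_zero_norm (fun z => ?_) tendsto_gpdf_atTop
    simp only [hW_def, norm_mul, Real.norm_eq_abs, abs_of_nonneg (gpdf_nonneg _)]
    nlinarith [abs_sigm_le_one (ν + c * z), gpdf_nonneg z, abs_nonneg (sigm (ν + c * z))]
  have hbot : Tendsto W atBot (nhds 0) := by
    refine squeeze_zero_norm (fun z => ?_) tendsto_gpdf_atBot
    simp only [hW_def, norm_mul, Real.norm_eq_abs, abs_of_nonneg (gpdf_nonneg _)]
    nlinarith [abs_sigm_le_one (ν + c * z), gpdf_nonneg z, abs_nonneg (sigm (ν + c * z))]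
  have h1 : ∫ z in Set.Ioi (0:ℝ), W' z = 0 - W 0 :=
    integral_Ioi_of_hasDerivAt_of_tendsto' (fun x _ => hW x) hint.integrableOn htop
  have h2 : ∫ z in Set.Iic (0:ℝ), W' z = W 0 - 0 :=
    integral_Iic_of_hasDerivAt_of_tendsto' (fun x _ => hW x) hint.integrableOn hbot
  have h0 : ∫ z, W' z = 0 := by
    rw [← intervalIntegral.integral_Iic_add_Ioi (b := (0:ℝ)) hint.integrableOn hint.integrableOn, h1, h2]
    ring
  have hI1 : Integrable (fun z => -z * gpdf z * sigm (ν + c * z)) := by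
    have : (fun z => -z * gpdf z * sigm (ν + c * z))
        = fun z => gpdf z * (-z * sigm (ν + c * z)) := by funext z; ring
    rw [this]
    apply integrable_gpdf_mul _ (by fun_prop) 0 1
    intro z
    rw [abs_mul, abs_neg]
    calc |z| * |sigm (ν + c * z)| ≤ |z| * 1 :=
          mul_le_mul_of_nonneg_left (abs_sigm_le_one _) (abs_nonneg z)
      _ = 0 + 1 * |z| := by ring
  have hI2 : Integrable (fun z => gpdf z * (c * (sigm (ν + c * z) - sigm (ν + c * z) ^ 2))) := by
    apply integrable_gpdf_mul _ (by fun_prop) (2 * |c|) 0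
    intro z
    have h1 := abs_sigm_le_one (ν + c * z)
    have h2 : |sigm (ν + c * z) ^ 2| ≤ 1 := by
      rw [abs_pow]; nlinarith [abs_nonneg (sigm (ν + c * z))]
    have hdiff : |sigm (ν + c * z) - sigm (ν + c * z) ^ 2| ≤ 2 := by
      calc |sigm (ν + c * z) - sigm (ν + c * z) ^ 2|
          ≤ |sigm (ν + c * z)| + |sigm (ν + c * z) ^ 2| := abs_sub _ _
        _ ≤ 2 := by linarith
    rw [abs_mul]
    calc |c| * |sigm (ν + c * z) - sigm (ν + c * z) ^ 2|
        ≤ |c| * 2 := mul_le_mul_of_nonneg_left hdiff (abs_nonneg c)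
      _ = 2 * |c| + 0 * |z| := by ring
  have hsplit : ∫ z, W' z = (∫ z, -z * gpdf z * sigm (ν + c * z))
      + ∫ z, gpdf z * (c * (sigm (ν + c * z) - sigm (ν + c * z) ^ 2)) :=
    integral_add hI1 hI2
  rw [hsplit] at h0
  have e1 : ∫ z, -z * gpdf z * sigm (ν + c * z) = -∫ z, gpdf z * (z * sigm (ν + c * z)) := by
    rw [← integral_neg]
    congr 1; funext z; ring
  have e2 : ∫ z, gpdf z * (c * (sigm (ν + c * z) - sigm (ν + c * z) ^ 2))
      = c * ∫ z, gpdf z * (sigm (ν + c * z) - sigm (ν + c * z) ^ 2) := by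
    rw [← integral_const_mul]
    congr 1; funext z; ring
  rw [e1, e2] at h0
  linarith

lemma sigm_bound_int (ν c : ℝ) :
    Integrable (fun z => sigm (ν + c * z)) (gaussianReal 0 1) :=
  integrable_gauss_of_bound _ (continuous_sigm.comp (by continuity)) 1 0
    (fun z => by simpa using abs_sigm_le_one (ν + c * z))

lemma sigm_sq_int (ν c : ℝ) :
    Integrable (fun z => sigm (ν + c * z) ^ 2) (gaussianReal 0 1) := by
  refine integrable_gauss_of_bound _ ((continuous_sigm.comp (by continuity)).pow 2) 1 0
    (fun z => ?_)
  rw [abs_pow]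
  nlinarith [abs_sigm_le_one (ν + c * z), abs_nonneg (sigm (ν + c * z))]

lemma zsigm_int (ν c : ℝ) :
    Integrable (fun z => z * sigm (ν + c * z)) (gaussianReal 0 1) := by
  refine integrable_gauss_of_bound _
    (continuous_id.mul (continuous_sigm.comp (by continuity))) 0 1 (fun z => ?_)
  rw [abs_mul]
  calc |z| * |sigm (ν + c * z)| ≤ |z| * 1 :=
        mul_le_mul_of_nonneg_left (abs_sigm_le_one _) (abs_nonneg z)
    _ = 0 + 1 * |z| := by ring

/-- The key inner derivative: differentiating the Gaussian expectation of
`gl` in the parameter, using Stein's lemma. -/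
lemma inner_deriv (s : ℝ) (hs : 0 < s) (μ0 : ℝ) (t : ℝ) (ht : 0 < t) :
    HasDerivAt
      (fun P2 => ∫ z, gl (μ0 - s / 2 * P2 + Real.sqrt (s * P2) * z) ∂(gaussianReal 0 1))
      (-(s / 2) * ∫ z, sigm (μ0 - s / 2 * t + Real.sqrt (s * t) * z) ^ 2 ∂(gaussianReal 0 1))
      t := by
  have hK0 : 0 < Real.sqrt (s * (t / 2)) := Real.sqrt_pos.2 (by positivity)
  set K := s / (2 * Real.sqrt (s * (t / 2))) with hK_def
  have hKpos : 0 < K := by rw [hK_def]; positivity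
  have hball : ∀ x ∈ Metric.ball t (t / 2), t / 2 < x := by
    intro x hx
    rw [Metric.mem_ball, Real.dist_eq, abs_lt] at hx
    linarith [hx.1]
  have hderiv : ∀ (z : ℝ), ∀ x ∈ Metric.ball t (t / 2),
      HasDerivAt (fun x => gl (μ0 - s / 2 * x + Real.sqrt (s * x) * z))
        (sigm (μ0 - s / 2 * x + Real.sqrt (s * x) * z)
          * (-(s / 2) + s / (2 * Real.sqrt (s * x)) * z)) x := by
    intro z x hx
    have hxpos : 0 < x := lt_trans (half_pos ht) (hball x hx)
    have hsx : 0 < s * x := mul_pos hs hxpos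
    have hmul : HasDerivAt (fun x : ℝ => s * x) s x := by
      simpa using (hasDerivAt_id x).const_mul s
    have hsqrt : HasDerivAt (fun x : ℝ => Real.sqrt (s * x))
        (1 / (2 * Real.sqrt (s * x)) * s) x :=
      (Real.hasDerivAt_sqrt hsx.ne').comp x hmul
    have hinner : HasDerivAt (fun x : ℝ => μ0 - s / 2 * x + Real.sqrt (s * x) * z)
        (-(s / 2) + s / (2 * Real.sqrt (s * x)) * z) x := by
      have h1 : HasDerivAt (fun x : ℝ => μ0 - s / 2 * x) (-(s / 2)) x := by
        simpa using ((hasDerivAt_id x).const_mul (s / 2)).const_sub μ0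
      have h2 := hsqrt.mul_const z
      refine (h1.add h2).congr_deriv (Eq.symm ?_)
      ring
    exact (hasDerivAt_gl _).comp x hinner
  have hcont : ∀ x : ℝ, Continuous fun z => gl (μ0 - s / 2 * x + Real.sqrt (s * x) * z) :=
    fun x => continuous_gl.comp (by continuity)
  have hF_int : Integrable (fun z => gl (μ0 - s / 2 * t + Real.sqrt (s * t) * z))
      (gaussianReal 0 1) := by
    refine integrable_gauss_of_bound _ (hcont t)
      (Real.log 2 + |μ0 - s / 2 * t|) (Real.sqrt (s * t)) (fun z => ?_)
    have h1 := abs_gl_le (μ0 - s / 2 * t + Real.sqrt (s * t) * z)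
    have h2 : |μ0 - s / 2 * t + Real.sqrt (s * t) * z|
        ≤ |μ0 - s / 2 * t| + Real.sqrt (s * t) * |z| := by
      calc |μ0 - s / 2 * t + Real.sqrt (s * t) * z|
          ≤ |μ0 - s / 2 * t| + |Real.sqrt (s * t) * z| := abs_add_le _ _
        _ = |μ0 - s / 2 * t| + Real.sqrt (s * t) * |z| := by
            rw [abs_mul, abs_of_nonneg (Real.sqrt_nonneg _)]
    linarith
  have hbound_int : Integrable (fun z : ℝ => s / 2 + K * |z|) (gaussianReal 0 1) := by
    refine integrable_gauss_of_bound _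
      (continuous_const.add (continuous_const.mul continuous_abs)) (s / 2) K (fun z => ?_)
    rw [abs_of_nonneg (by positivity)]
  have hbnd : ∀ (z : ℝ), ∀ x ∈ Metric.ball t (t / 2),
      ‖sigm (μ0 - s / 2 * x + Real.sqrt (s * x) * z)
        * (-(s / 2) + s / (2 * Real.sqrt (s * x)) * z)‖ ≤ s / 2 + K * |z| := by
    intro z x hx
    have hxgt := hball x hx
    have hxpos : 0 < x := lt_trans (half_pos ht) hxgt
    have hsle : Real.sqrt (s * (t / 2)) ≤ Real.sqrt (s * x) :=
      Real.sqrt_le_sqrt (by nlinarith)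
    have hκpos : (0:ℝ) ≤ s / (2 * Real.sqrt (s * x)) := by positivity
    have hκ : s / (2 * Real.sqrt (s * x)) ≤ K := by
      rw [hK_def]
      gcongr
    have habs : |(-(s / 2) + s / (2 * Real.sqrt (s * x)) * z)| ≤ s / 2 + K * |z| := by
      calc |(-(s / 2) + s / (2 * Real.sqrt (s * x)) * z)|
          ≤ |(-(s / 2))| + |s / (2 * Real.sqrt (s * x)) * z| := abs_add_le _ _
        _ = s / 2 + s / (2 * Real.sqrt (s * x)) * |z| := by
            rw [abs_neg, abs_of_nonneg (by positivity : (0:ℝ) ≤ s / 2), abs_mul,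
              abs_of_nonneg hκpos]
        _ ≤ s / 2 + K * |z| := by
            have := mul_le_mul_of_nonneg_right hκ (abs_nonneg z)
            linarith
    calc ‖sigm (μ0 - s / 2 * x + Real.sqrt (s * x) * z)
          * (-(s / 2) + s / (2 * Real.sqrt (s * x)) * z)‖
        = |sigm (μ0 - s / 2 * x + Real.sqrt (s * x) * z)|
          * |(-(s / 2) + s / (2 * Real.sqrt (s * x)) * z)| := by
          rw [norm_mul, Real.norm_eq_abs, Real.norm_eq_abs]
      _ ≤ 1 * (s / 2 + K * |z|) :=
          mul_le_mul (abs_sigm_le_one _) habs (abs_nonneg _) one_pos.le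
      _ = s / 2 + K * |z| := one_mul _
  obtain ⟨-, hmain⟩ := hasDerivAt_integral_of_dominated_loc_of_deriv_le
    (μ := gaussianReal 0 1) (x₀ := t)
    (F := fun x z => gl (μ0 - s / 2 * x + Real.sqrt (s * x) * z))
    (F' := fun x z => sigm (μ0 - s / 2 * x + Real.sqrt (s * x) * z)
      * (-(s / 2) + s / (2 * Real.sqrt (s * x)) * z))
    (bound := fun z => s / 2 + K * |z|)
    (Metric.ball_mem_nhds t (half_pos ht))
    (Eventually.of_forall fun x => (hcont x).aestronglyMeasurable)
    hF_int
    ((continuous_sigm.comp (by continuity)).mul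
      (continuous_const.add (continuous_const.mul continuous_id))).aestronglyMeasurable
    (Eventually.of_forall hbnd)
    hbound_int
    (Eventually.of_forall fun z x hx => hderiv z x hx)
  -- rewrite the derivative value using Stein's lemma
  have hc : 0 < Real.sqrt (s * t) := Real.sqrt_pos.2 (by positivity)
  set ν := μ0 - s / 2 * t with hν
  set c := Real.sqrt (s * t) with hc_def
  have hval : (∫ z, sigm (ν + c * z) * (-(s / 2) + s / (2 * c) * z) ∂(gaussianReal 0 1))
      = -(s / 2) * ∫ z, sigm (ν + c * z) ^ 2 ∂(gaussianReal 0 1) := by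
    have e0 : (fun z => sigm (ν + c * z) * (-(s / 2) + s / (2 * c) * z))
        = fun z => -(s / 2) * sigm (ν + c * z) + s / (2 * c) * (z * sigm (ν + c * z)) := by
      funext z; ring
    rw [e0, integral_add ((sigm_bound_int ν c).const_mul _) ((zsigm_int ν c).const_mul _),
      integral_const_mul, integral_const_mul, stein_sigm ν c,
      integral_sub (sigm_bound_int ν c) (sigm_sq_int ν c)]
    field_simp
    ring
  rw [hval] at hmain
  exact hmain

end Aux16

/-- The replica-symmetric free energy `A`, viewed as a function of
the auxiliary place-cell overlap `p̄₂`, is differentiable at `p̄₂ > 0` with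
`∂A/∂p̄₂ = (p/2) q̄₂^{p/2-1} (q̄₂ - H)` where
`H = (1/π) ∫_0^π ∫ σ(f(θ,z))² dγ(z) dθ`; in particular, since `q̄₂ > 0`, the
stationarity condition `∂A/∂p̄₂ = 0` holds iff `q̄₂ = H`. -/
theorem stmt16 (p : ℕ) (hpeven : Even p) (hp4 : 4 ≤ p)
    (α β lam : ℝ) (hα : 0 < α) (hβ : 0 < β)
    (xb mb q1 q2 p1 : ℝ) (hq1 : 0 < q1) (hq2 : 0 < q2)
    (p2 : ℝ) (hp2 : 0 < p2)
    (f : ℝ → ℝ → ℝ → ℝ)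
    (hf : ∀ P2 θ z, f P2 θ z
      = β * p * xb ^ (p - 1) * Real.cos θ - β * p * (lam - 1) * mb ^ (p - 1)
        + ((p : ℝ) / 2) * (p1 * q1 ^ (p / 2 - 1) - P2 * q2 ^ (p / 2 - 1))
        + Real.sqrt ((p : ℝ) * P2 * q2 ^ (p / 2 - 1)) * z)
    (A : ℝ → ℝ)
    (hA : ∀ P2, A P2
      = (1 - (p : ℝ)) * β * xb ^ p - β * (lam - 1) * (1 - (p : ℝ)) * mb ^ p
        + α * β ^ 2 * (q1 ^ p - q2 ^ p)
        - ((p : ℝ) / 2) * (p1 * q1 ^ (p / 2) - P2 * q2 ^ (p / 2))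
        + (1 / Real.pi) * ∫ θ in (0:ℝ)..Real.pi,
            ∫ z : ℝ, Real.log (1 + Real.exp (f P2 θ z)) ∂(gaussianReal 0 1))
    (H : ℝ)
    (hH : H = (1 / Real.pi) * ∫ θ in (0:ℝ)..Real.pi,
        ∫ z : ℝ, (1 / (1 + Real.exp (-(f p2 θ z)))) ^ 2 ∂(gaussianReal 0 1)) :
    HasDerivAt A (((p : ℝ) / 2) * q2 ^ (p / 2 - 1) * (q2 - H)) p2
      ∧ (deriv A p2 = 0 ↔ q2 = H) := by
  have hπ : 0 < Real.pi := Real.pi_pos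
  have hp0 : (0:ℝ) < (p:ℝ) := by
    have : (4:ℝ) ≤ (p:ℝ) := by exact_mod_cast hp4
    linarith
  set s : ℝ := (p:ℝ) * q2 ^ (p / 2 - 1) with hs_def
  have hs : 0 < s := mul_pos hp0 (pow_pos hq2 _)
  set a : ℝ → ℝ := fun θ => β * p * xb ^ (p - 1) * Real.cos θ
      + (-(β * (p:ℝ) * (lam - 1) * mb ^ (p - 1))
        + (p:ℝ) / 2 * (p1 * q1 ^ (p / 2 - 1))) with ha_def
  have hfeq : ∀ P2 θ z, f P2 θ z = a θ - s / 2 * P2 + Real.sqrt (s * P2) * z := by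
    intro P2 θ z
    rw [hf, show (p:ℝ) * P2 * q2 ^ (p / 2 - 1) = s * P2 by rw [hs_def]; ring]
    simp only [ha_def]
    rw [hs_def]
    ring
  set Ma : ℝ := |β * (p:ℝ) * xb ^ (p - 1)| + |(-(β * (p:ℝ) * (lam - 1) * mb ^ (p - 1))
      + (p:ℝ) / 2 * (p1 * q1 ^ (p / 2 - 1)))| with hMa_def
  have haθ : ∀ θ, |a θ| ≤ Ma := by
    intro θ
    rw [ha_def, hMa_def]
    calc |β * ↑p * xb ^ (p - 1) * Real.cos θ + (-(β * ↑p * (lam - 1) * mb ^ (p - 1))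
          + ↑p / 2 * (p1 * q1 ^ (p / 2 - 1)))|
        ≤ |β * ↑p * xb ^ (p - 1) * Real.cos θ| + |(-(β * ↑p * (lam - 1) * mb ^ (p - 1))
          + ↑p / 2 * (p1 * q1 ^ (p / 2 - 1)))| := abs_add_le _ _
      _ ≤ |β * ↑p * xb ^ (p - 1)| + |(-(β * ↑p * (lam - 1) * mb ^ (p - 1))
          + ↑p / 2 * (p1 * q1 ^ (p / 2 - 1)))| := by
          refine add_le_add_left ?_ _
          rw [abs_mul]
          calc |β * ↑p * xb ^ (p - 1)| * |Real.cos θ| ≤ |β * ↑p * xb ^ (p - 1)| * 1 :=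
                mul_le_mul_of_nonneg_left (Real.abs_cos_le_one θ) (abs_nonneg _)
            _ = |β * ↑p * xb ^ (p - 1)| := mul_one _
  have ha_cont : Continuous a := by
    rw [ha_def]
    exact (continuous_const.mul Real.continuous_cos).add continuous_const
  -- continuity in θ of the inner integrals
  have contF : ∀ x : ℝ, Continuous fun θ =>
      ∫ z, gl (a θ - s / 2 * x + Real.sqrt (s * x) * z) ∂(gaussianReal 0 1) := by
    intro x
    apply continuous_of_dominated
      (bound := fun z => Real.log 2 + Ma + s / 2 * |x| + Real.sqrt (s * x) * |z|)
    · intro θ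
      exact (continuous_gl.comp
        (continuous_const.add (continuous_const.mul continuous_id))).aestronglyMeasurable
    · intro θ
      refine Eventually.of_forall fun z => ?_
      rw [Real.norm_eq_abs]
      have h1 := abs_gl_le (a θ - s / 2 * x + Real.sqrt (s * x) * z)
      have h2 : |a θ - s / 2 * x + Real.sqrt (s * x) * z|
          ≤ Ma + s / 2 * |x| + Real.sqrt (s * x) * |z| := by
        have h3 := haθ θ
        have h4 : |s / 2 * x| = s / 2 * |x| := by
          rw [abs_mul, abs_of_nonneg (by positivity : (0:ℝ) ≤ s / 2)]
        have h5 : |Real.sqrt (s * x) * z| = Real.sqrt (s * x) * |z| := by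
          rw [abs_mul, abs_of_nonneg (Real.sqrt_nonneg _)]
        calc |a θ - s / 2 * x + Real.sqrt (s * x) * z|
            ≤ |a θ - s / 2 * x| + |Real.sqrt (s * x) * z| := abs_add_le _ _
          _ ≤ |a θ| + |s / 2 * x| + |Real.sqrt (s * x) * z| := by
              have h6 : |a θ - s / 2 * x| ≤ |a θ| + |s / 2 * x| := abs_sub _ _
              linarith
          _ ≤ Ma + s / 2 * |x| + Real.sqrt (s * x) * |z| := by
              rw [h4, h5]
              exact add_le_add_left (add_le_add_left h3 _) _
      linarith
    · refine integrable_gauss_of_bound _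
        (continuous_const.add (continuous_const.mul continuous_abs))
        (Real.log 2 + Ma + s / 2 * |x|) (Real.sqrt (s * x)) (fun z => ?_)
      have hMa0 : 0 ≤ Ma := by rw [hMa_def]; positivity
      rw [abs_of_nonneg (by positivity)]
    · refine Eventually.of_forall fun z => ?_
      exact continuous_gl.comp ((ha_cont.sub continuous_const).add continuous_const)
  have contF' : Continuous fun θ =>
      ∫ z, sigm (a θ - s / 2 * p2 + Real.sqrt (s * p2) * z) ^ 2 ∂(gaussianReal 0 1) := by
    apply continuous_of_dominated (bound := fun _ => (1:ℝ))
    · intro θ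
      exact ((continuous_sigm.comp
        (continuous_const.add (continuous_const.mul continuous_id))).pow 2).aestronglyMeasurable
    · intro θ
      refine Eventually.of_forall fun z => ?_
      rw [Real.norm_eq_abs, abs_pow]
      nlinarith [abs_sigm_le_one (a θ - s / 2 * p2 + Real.sqrt (s * p2) * z),
        abs_nonneg (sigm (a θ - s / 2 * p2 + Real.sqrt (s * p2) * z))]
    · exact integrable_const 1
    · refine Eventually.of_forall fun z => ?_
      exact (continuous_sigm.comp
        ((ha_cont.sub continuous_const).add continuous_const)).pow 2
  -- differentiate the θ-integral
  have hball : ∀ x ∈ Metric.ball p2 (p2 / 2), 0 < x := by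
    intro x hx
    rw [Metric.mem_ball, Real.dist_eq, abs_lt] at hx
    linarith [hx.1]
  have hbnd2 : ∀ (θ : ℝ), θ ∈ Set.uIoc (0:ℝ) Real.pi → ∀ x ∈ Metric.ball p2 (p2 / 2),
      ‖-(s / 2) * ∫ z, sigm (a θ - s / 2 * x + Real.sqrt (s * x) * z) ^ 2
        ∂(gaussianReal 0 1)‖ ≤ s / 2 := by
    intro θ _ x _
    rw [Real.norm_eq_abs, abs_mul, abs_neg, abs_of_nonneg (by positivity : (0:ℝ) ≤ s / 2)]
    have hle : |∫ z, sigm (a θ - s / 2 * x + Real.sqrt (s * x) * z) ^ 2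
        ∂(gaussianReal 0 1)| ≤ 1 := by
      have := norm_integral_le_of_norm_le_const (μ := gaussianReal 0 1)
        (f := fun z => sigm (a θ - s / 2 * x + Real.sqrt (s * x) * z) ^ 2) (C := 1)
        (Eventually.of_forall fun z => by
          rw [Real.norm_eq_abs, abs_pow]
          nlinarith [abs_sigm_le_one (a θ - s / 2 * x + Real.sqrt (s * x) * z),
            abs_nonneg (sigm (a θ - s / 2 * x + Real.sqrt (s * x) * z))])
      simpa using this
    calc s / 2 * |∫ z, sigm (a θ - s / 2 * x + Real.sqrt (s * x) * z) ^ 2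
          ∂(gaussianReal 0 1)| ≤ s / 2 * 1 :=
          mul_le_mul_of_nonneg_left hle (by positivity)
      _ = s / 2 := mul_one _
  obtain ⟨-, hJ⟩ := intervalIntegral.hasDerivAt_integral_of_dominated_loc_of_deriv_le
    (μ := volume) (a := 0) (b := Real.pi) (x₀ := p2)
    (F := fun x θ => ∫ z, gl (a θ - s / 2 * x + Real.sqrt (s * x) * z) ∂(gaussianReal 0 1))
    (F' := fun x θ => -(s / 2)
      * ∫ z, sigm (a θ - s / 2 * x + Real.sqrt (s * x) * z) ^ 2 ∂(gaussianReal 0 1))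
    (bound := fun _ => s / 2)
    (Metric.ball_mem_nhds p2 (half_pos hp2))
    (Eventually.of_forall fun x => (contF x).aestronglyMeasurable.restrict)
    ((contF p2).intervalIntegrable 0 Real.pi)
    ((continuous_const.mul contF').aestronglyMeasurable.restrict)
    (Eventually.of_forall hbnd2)
    (intervalIntegrable_const)
    (Eventually.of_forall fun θ _ x hx => inner_deriv s hs (a θ) x (hball x hx))
  -- assemble the derivative of A
  have hAfun : A = fun P2 => ((1 - (p : ℝ)) * β * xb ^ p
      - β * (lam - 1) * (1 - (p : ℝ)) * mb ^ p
      + α * β ^ 2 * (q1 ^ p - q2 ^ p) - (p : ℝ) / 2 * (p1 * q1 ^ (p / 2)))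
      + ((p : ℝ) / 2 * q2 ^ (p / 2)) * P2
      + (1 / Real.pi) * ∫ θ in (0:ℝ)..Real.pi,
          ∫ z, gl (a θ - s / 2 * P2 + Real.sqrt (s * P2) * z) ∂(gaussianReal 0 1) := by
    funext P2
    rw [hA]
    simp only [hfeq, gl]
    ring
  have hHT : (∫ θ in (0:ℝ)..Real.pi,
      ∫ z, sigm (a θ - s / 2 * p2 + Real.sqrt (s * p2) * z) ^ 2 ∂(gaussianReal 0 1))
      = Real.pi * H := by
    have : H = (1 / Real.pi) * ∫ θ in (0:ℝ)..Real.pi,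
        ∫ z, sigm (a θ - s / 2 * p2 + Real.sqrt (s * p2) * z) ^ 2 ∂(gaussianReal 0 1) := by
      rw [hH]
      simp only [hfeq, sigm]
    rw [this, ← mul_assoc, mul_one_div_cancel hπ.ne', one_mul]
  have hq2pow : q2 ^ (p / 2) = q2 ^ (p / 2 - 1) * q2 := by
    rw [← pow_succ]
    congr 1
    omega
  have hDval : (∫ θ in (0:ℝ)..Real.pi, -(s / 2)
      * ∫ z, sigm (a θ - s / 2 * p2 + Real.sqrt (s * p2) * z) ^ 2 ∂(gaussianReal 0 1))
      = -(s / 2) * (Real.pi * H) := by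
    rw [intervalIntegral.integral_const_mul, hHT]
  have hd : HasDerivAt A (((p : ℝ) / 2) * q2 ^ (p / 2 - 1) * (q2 - H)) p2 := by
    rw [hAfun]
    have hbase := ((hasDerivAt_const p2 ((1 - (p : ℝ)) * β * xb ^ p
        - β * (lam - 1) * (1 - (p : ℝ)) * mb ^ p
        + α * β ^ 2 * (q1 ^ p - q2 ^ p) - (p : ℝ) / 2 * (p1 * q1 ^ (p / 2)))).add
      (((hasDerivAt_id p2).const_mul ((p : ℝ) / 2 * q2 ^ (p / 2))))).add
      (hJ.const_mul (1 / Real.pi))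
    refine hbase.congr_deriv (Eq.symm ?_)
    rw [hDval, hs_def, hq2pow]
    field_simp
    ring
  refine ⟨hd, ?_⟩
  rw [hd.deriv]
  constructor
  · intro h0
    have hpos : (0:ℝ) < (p : ℝ) / 2 * q2 ^ (p / 2 - 1) := by positivity
    rcases mul_eq_zero.1 h0 with h | h
    · exact absurd h hpos.ne'
    · linarith [sub_eq_zero.1 h]
  · intro h
    rw [h]
    ring
end
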